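/- Let D be a product distribution over n-job instances (each job independently present/absent or with independent type), m machines, and weights w inducing fractional loads L_i(w,S) = sum_{j in S} x_{ij}(w) with x_{ij}(w) in [0,1] independent across jobs. If E[OPT(S)] >= ((4+2eps)/eps^2) log(m/sqrt(eps)) and max_i E[L_i(w,S)] >= E[OPT(S)] and max_i E[L_i(w,S)] >= n/m, then E[max_i L_i(w,S)] <= (1+2eps) max_i E[L_i(w,S)]. -/

import Mathlib

open MeasureTheory ProbabilityTheory


lemma exp_cubic_bound {t : ℝ} (h0 : 0 ≤ t) (h1 : t ≤ 1) :
    Real.exp t ≤ 1 + t + t ^ 2 / 2 + 2 * t ^ 3 / 9 := by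
  have h := Real.exp_bound (x := t) (by rwa [abs_of_nonneg h0]) (n := 3) (by norm_num)
  rw [abs_of_nonneg h0] at h
  have h2 := (abs_sub_le_iff.1 h).1
  simp only [Finset.sum_range_succ, Finset.sum_range_zero, Nat.factorial] at h2
  norm_num at h2
  nlinarith [pow_nonneg h0 3]

lemma key_exp_ineq {ε : ℝ} (h0 : 0 < ε) (h1 : ε < 1) :
    Real.exp (2 * ε / (2 + ε)) ≤ 1 + ε := by
  have h2 : (0:ℝ) < 2 + ε := by linarith
  set t : ℝ := 2 * ε / (2 + ε) with htdef
  have ht0 : 0 ≤ t := by positivity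
  have ht1 : t ≤ 1 := by rw [htdef, div_le_one h2]; linarith
  have ht : t * (2 + ε) = 2 * ε := by rw [htdef]; field_simp
  refine (exp_cubic_bound ht0 ht1).trans ?_
  nlinarith [sq_nonneg t, sq_nonneg (t - ε), mul_pos h0 h2, sq_nonneg ε]


lemma exp_mul_le_of_mem_Icc {x t : ℝ} (hx : x ∈ Set.Icc (0:ℝ) 1) :
    Real.exp (t * x) ≤ 1 - x + x * Real.exp t := by
  have h := convexOn_exp.2 (Set.mem_univ (0:ℝ)) (Set.mem_univ t)
    (by linarith [hx.2] : (0:ℝ) ≤ 1 - x) hx.1 (by ring)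
  simp only [smul_eq_mul, mul_zero, zero_add, Real.exp_zero, mul_one] at h
  calc Real.exp (t * x) = Real.exp (x * t) := by rw [mul_comm]
    _ ≤ (1 - x) * 1 + x * Real.exp t := by simpa using h
    _ = 1 - x + x * Real.exp t := by ring

lemma mgf_single_le {Ω : Type*} [MeasureSpace Ω] [IsProbabilityMeasure (ℙ : Measure Ω)]
    {Y : Ω → ℝ} (hY : Measurable Y) (hb : ∀ ω, Y ω ∈ Set.Icc (0:ℝ) 1) {t : ℝ} :
    mgf Y ℙ t ≤ Real.exp ((Real.exp t - 1) * ∫ ω, Y ω ∂ℙ) := by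
  have hYint : Integrable Y ℙ := by
    refine (integrable_const (1:ℝ)).mono' hY.aestronglyMeasurable (ae_of_all _ fun ω => ?_)
    rw [Real.norm_eq_abs, abs_le]; exact ⟨by linarith [(hb ω).1], (hb ω).2⟩
  have hexpint : Integrable (fun ω => Real.exp (t * Y ω)) ℙ := by
    refine (integrable_const (Real.exp |t|)).mono'
      ((hY.const_mul t).exp).aestronglyMeasurable (ae_of_all _ fun ω => ?_)
    rw [Real.norm_eq_abs, abs_of_pos (Real.exp_pos _), Real.exp_le_exp]
    calc t * Y ω ≤ |t * Y ω| := le_abs_self _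
      _ = |t| * |Y ω| := abs_mul _ _
      _ ≤ |t| * 1 := by
          refine mul_le_mul_of_nonneg_left ?_ (abs_nonneg t)
          rw [abs_le]; exact ⟨by linarith [(hb ω).1], (hb ω).2⟩
      _ = |t| := mul_one _
  have h1 : mgf Y ℙ t ≤ ∫ ω, (1 - Y ω + Y ω * Real.exp t) ∂ℙ := by
    refine integral_mono hexpint ?_ (fun ω => exp_mul_le_of_mem_Icc (hb ω))
    exact ((integrable_const (1:ℝ)).sub hYint).add (hYint.mul_const _)
  have h2 : ∫ ω, (1 - Y ω + Y ω * Real.exp t) ∂ℙ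
      = 1 + (Real.exp t - 1) * ∫ ω, Y ω ∂ℙ := by
    have e1 : ∀ ω, (1 : ℝ) - Y ω + Y ω * Real.exp t = 1 + (Real.exp t - 1) * Y ω := by
      intro ω; ring
    simp_rw [e1]
    rw [integral_add (integrable_const 1) (hYint.const_mul _), integral_const,
      integral_const_mul]
    simp
  calc mgf Y ℙ t ≤ 1 + (Real.exp t - 1) * ∫ ω, Y ω ∂ℙ := h1.trans_eq h2
    _ ≤ Real.exp ((Real.exp t - 1) * ∫ ω, Y ω ∂ℙ) := by
        have := Real.add_one_le_exp ((Real.exp t - 1) * ∫ ω, Y ω ∂ℙ); linarith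

lemma chernoff_sum {Ω : Type*} [MeasureSpace Ω] [IsProbabilityMeasure (ℙ : Measure Ω)]
    {n : ℕ} {Y : Fin n → Ω → ℝ} (hm : ∀ j, Measurable (Y j))
    (hi : iIndepFun Y ℙ)
    (hb : ∀ j ω, Y j ω ∈ Set.Icc (0:ℝ) 1) {t a μv : ℝ} (ht0 : 0 ≤ t)
    (hE : (∫ ω, ∑ j, Y j ω ∂ℙ) ≤ μv) :
    (ℙ {ω | a ≤ ∑ j, Y j ω}).toReal
      ≤ Real.exp (-t * a) * Real.exp ((Real.exp t - 1) * μv) := by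
  have hsum_meas : Measurable (fun ω => ∑ j, Y j ω) :=
    Finset.measurable_sum _ fun j _ => hm j
  have hint : Integrable (fun ω => Real.exp (t * ∑ j, Y j ω)) ℙ := by
    refine (integrable_const (Real.exp (t * n))).mono'
      ((hsum_meas.const_mul t).exp).aestronglyMeasurable (ae_of_all _ fun ω => ?_)
    rw [Real.norm_eq_abs, abs_of_pos (Real.exp_pos _), Real.exp_le_exp]
    refine mul_le_mul_of_nonneg_left ?_ ht0
    calc ∑ j, Y j ω ≤ ∑ _j : Fin n, (1:ℝ) := Finset.sum_le_sum fun j _ => (hb j ω).2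
      _ = n := by simp
  have hYint : ∀ j, Integrable (Y j) ℙ := fun j => by
    refine (integrable_const (1:ℝ)).mono' (hm j).aestronglyMeasurable (ae_of_all _ fun ω => ?_)
    rw [Real.norm_eq_abs, abs_le]; exact ⟨by linarith [(hb j ω).1], (hb j ω).2⟩
  have hfun : (fun ω => ∑ j, Y j ω) = ∑ j, Y j := by
    funext ω; simp
  have h1 := measure_ge_le_exp_mul_mgf (X := fun ω => ∑ j, Y j ω) (μ := ℙ) a ht0 hint
  have hmgf : mgf (fun ω => ∑ j, Y j ω) ℙ t ≤ Real.exp ((Real.exp t - 1) * μv) := by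
    rw [hfun, hi.mgf_sum hm Finset.univ]
    calc ∏ j, mgf (Y j) ℙ t
        ≤ ∏ j, Real.exp ((Real.exp t - 1) * ∫ ω, Y j ω ∂ℙ) :=
          Finset.prod_le_prod (fun j _ => mgf_nonneg)
            (fun j _ => mgf_single_le (hm j) (hb j))
      _ = Real.exp (∑ j, (Real.exp t - 1) * ∫ ω, Y j ω ∂ℙ) := (Real.exp_sum _ _).symm
      _ ≤ Real.exp ((Real.exp t - 1) * μv) := by
          rw [Real.exp_le_exp, ← Finset.mul_sum]
          have hsumE : ∑ j, ∫ ω, Y j ω ∂ℙ = ∫ ω, ∑ j, Y j ω ∂ℙ :=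
            (integral_finset_sum _ fun j _ => hYint j).symm
          rw [hsumE]
          exact mul_le_mul_of_nonneg_left hE (by linarith [Real.one_le_exp ht0])
  calc (ℙ {ω | a ≤ ∑ j, Y j ω}).toReal
      ≤ Real.exp (-t * a) * mgf (fun ω => ∑ j, Y j ω) ℙ t := h1
    _ ≤ Real.exp (-t * a) * Real.exp ((Real.exp t - 1) * μv) :=
        mul_le_mul_of_nonneg_left hmgf (Real.exp_pos _).le

/-- If each machine load `L_i = ∑_j X i j` is a sum of `n` independent `[0,1]`-valued
random variables, `E[OPT] ≥ ((4+2ε)/ε²)·log(m/√ε)`, `max_i E[L_i] ≥ E[OPT]`, and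
`max_i E[L_i] ≥ n/m`, then `E[max_i L_i] ≤ (1+2ε)·max_i E[L_i]`. -/
theorem expected_makespan_close_to_max_expected_load
    {Ω : Type*} [MeasureSpace Ω] [IsProbabilityMeasure (ℙ : Measure Ω)]
    (m n : ℕ) [NeZero m]
    (X : Fin m → Fin n → Ω → ℝ)
    (hmeas : ∀ i j, Measurable (X i j))
    (hindep : ∀ i, iIndepFun (X i) ℙ)
    (hbdd : ∀ i j ω, X i j ω ∈ Set.Icc (0 : ℝ) 1)
    (OPT : Ω → ℝ) (hOPTmeas : Measurable OPT)
    (ε : ℝ) (hε : ε ∈ Set.Ioo (0 : ℝ) 1)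
    (hEOPT : ((4 + 2 * ε) / ε ^ 2) * Real.log ((m : ℝ) / Real.sqrt ε) ≤ ∫ ω, OPT ω ∂ℙ)
    (hmax1 : (∫ ω, OPT ω ∂ℙ) ≤ ⨆ i : Fin m, ∫ ω, ∑ j, X i j ω ∂ℙ)
    (hmax2 : (n : ℝ) / m ≤ ⨆ i : Fin m, ∫ ω, ∑ j, X i j ω ∂ℙ) :
    (∫ ω, ⨆ i : Fin m, ∑ j, X i j ω ∂ℙ) ≤
      (1 + 2 * ε) * ⨆ i : Fin m, ∫ ω, ∑ j, X i j ω ∂ℙ := by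
  obtain ⟨hε0, hε1⟩ := hε
  have hm1 : (1:ℝ) ≤ m := by
    exact_mod_cast Nat.one_le_iff_ne_zero.2 (NeZero.ne m)
  set L : Fin m → Ω → ℝ := fun i ω => ∑ j, X i j ω with hLdef
  show (∫ ω, ⨆ i : Fin m, L i ω ∂ℙ) ≤ (1 + 2 * ε) * ⨆ i : Fin m, ∫ ω, L i ω ∂ℙ
  set μv : ℝ := ⨆ i : Fin m, ∫ ω, L i ω ∂ℙ with hμdef
  -- basic facts about L
  have hLmeas : ∀ i, Measurable (L i) := fun i => Finset.measurable_sum _ fun j _ => hmeas i j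
  have hXint : ∀ i j, Integrable (X i j) ℙ := fun i j => by
    refine (integrable_const (1:ℝ)).mono' (hmeas i j).aestronglyMeasurable
      (ae_of_all _ fun ω => ?_)
    rw [Real.norm_eq_abs, abs_le]; exact ⟨by linarith [(hbdd i j ω).1], (hbdd i j ω).2⟩
  have hLint : ∀ i, Integrable (L i) ℙ := fun i =>
    integrable_finset_sum _ fun j _ => hXint i j
  have hLnonneg : ∀ i ω, 0 ≤ L i ω := fun i ω =>
    Finset.sum_nonneg fun j _ => (hbdd i j ω).1
  have hLlen : ∀ i ω, L i ω ≤ n := fun i ω => by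
    calc L i ω ≤ ∑ _j : Fin n, (1:ℝ) := Finset.sum_le_sum fun j _ => (hbdd i j ω).2
      _ = n := by simp
  have hbdda : BddAbove (Set.range fun i : Fin m => ∫ ω, L i ω ∂ℙ) :=
    (Set.finite_range _).bddAbove
  have hEL_le : ∀ i, (∫ ω, L i ω ∂ℙ) ≤ μv := fun i => le_ciSup hbdda i
  -- positivity facts
  have hsqrt_pos : 0 < Real.sqrt ε := Real.sqrt_pos.2 hε0
  have hsqrt_lt : Real.sqrt ε < 1 := by
    nlinarith [Real.sq_sqrt hε0.le, Real.sqrt_nonneg ε]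
  set a : ℝ := (m:ℝ) / Real.sqrt ε with hadef
  have ha1 : 1 < a := by
    rw [hadef, lt_div_iff₀ hsqrt_pos, one_mul]; linarith
  have hlogpos : 0 < Real.log a := Real.log_pos ha1
  have hμ_lb : ((4 + 2 * ε) / ε ^ 2) * Real.log a ≤ μv := hEOPT.trans hmax1
  have hμpos : 0 < μv := lt_of_lt_of_le (by positivity) hμ_lb
  have hμ_lb' : (4 + 2 * ε) * Real.log a ≤ μv * ε ^ 2 := by
    rw [div_mul_eq_mul_div, div_le_iff₀ (by positivity)] at hμ_lb
    linarith
  -- the Chernoff parameter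
  have h2ε : (0:ℝ) < 2 + ε := by linarith
  set t : ℝ := 2 * ε / (2 + ε) with htdef
  have ht0 : 0 < t := by positivity
  have htc : t * (2 + ε) = 2 * ε := by rw [htdef]; field_simp
  have hexp_t : Real.exp t ≤ 1 + ε := key_exp_ineq hε0 hε1
  -- per-machine tail bound
  have hPle : ∀ i : Fin m, (ℙ {ω | (1 + ε) * μv ≤ L i ω}).toReal ≤ ε / m ^ 2 := by
    intro i
    have h1 := chernoff_sum (hm := hmeas i) (hindep i) (hbdd i)
      (a := (1 + ε) * μv) ht0.le (hEL_le i)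
    refine h1.trans ?_
    rw [← Real.exp_add]
    have hexpo : -t * ((1 + ε) * μv) + (Real.exp t - 1) * μv ≤ -2 * Real.log a := by
      have hmain : -t * ((1 + ε) * μv) + (Real.exp t - 1) * μv ≤ -(ε ^ 2 / (2 + ε)) * μv := by
        have he : ε - t * (1 + ε) = -(ε ^ 2 / (2 + ε)) := by
          rw [htdef]; field_simp; ring
        nlinarith [hμpos.le, hexp_t]
      refine hmain.trans ?_
      have h4 : 2 * Real.log a ≤ ε ^ 2 / (2 + ε) * μv := by
        rw [div_mul_eq_mul_div, le_div_iff₀ h2ε]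
        nlinarith [hμ_lb', hlogpos]
      linarith
    calc Real.exp (-t * ((1 + ε) * μv) + (Real.exp t - 1) * μv)
        ≤ Real.exp (-2 * Real.log a) := Real.exp_le_exp.2 hexpo
      _ = (a ^ 2)⁻¹ := by
          rw [show (-2:ℝ) * Real.log a = Real.log ((a ^ 2)⁻¹) by
            rw [Real.log_inv, Real.log_pow]; push_cast; ring]
          exact Real.exp_log (by positivity)
      _ = ε / m ^ 2 := by
          rw [hadef, div_pow, Real.sq_sqrt hε0.le]
          rw [inv_div]
  -- the pointwise bound and integration
  haveI hne : Nonempty (Fin m) := Fin.pos_iff_nonempty.1 (Nat.pos_of_ne_zero (NeZero.ne m))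
  have hune : (Finset.univ : Finset (Fin m)).Nonempty := Finset.univ_nonempty
  set M : Ω → ℝ := fun ω => Finset.univ.sup' hune (fun i => L i ω) with hMdef
  have hMeq : ∀ ω, (⨆ i : Fin m, L i ω) = M ω := by
    intro ω
    show (⨆ i : Fin m, L i ω) = Finset.univ.sup' hune (fun i => L i ω)
    refine le_antisymm (ciSup_le fun i => Finset.le_sup' (fun i => L i ω) (Finset.mem_univ i))
      (Finset.sup'_le _ _ fun i _ => le_ciSup (f := fun i => L i ω) ((Set.finite_range _).bddAbove) i)
  have hMmeas : Measurable M := by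
    have : M = Finset.univ.sup' hune L := funext fun ω => by
      rw [hMdef]; exact (Finset.sup'_apply hune L ω).symm
    rw [this]
    exact Finset.measurable_sup' hune fun i _ => hLmeas i
  have hMnonneg : ∀ ω, 0 ≤ M ω := by
    intro ω
    show (0:ℝ) ≤ Finset.univ.sup' hune (fun i => L i ω)
    exact le_trans (hLnonneg hne.some ω)
      (Finset.le_sup' (fun i => L i ω) (Finset.mem_univ hne.some))
  have hMle : ∀ ω, M ω ≤ n := fun ω => Finset.sup'_le _ _ fun i _ => hLlen i ω
  have hMint : Integrable M ℙ := by
    refine (integrable_const (n:ℝ)).mono' hMmeas.aestronglyMeasurable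
      (ae_of_all _ fun ω => ?_)
    rw [Real.norm_eq_abs, abs_le]
    exact ⟨by linarith [hMnonneg ω, hMle ω, Nat.cast_nonneg (α := ℝ) n], hMle ω⟩
  have hset : ∀ i : Fin m, MeasurableSet {ω | (1 + ε) * μv ≤ L i ω} := fun i =>
    measurableSet_le measurable_const (hLmeas i)
  set g : Ω → ℝ := fun ω => (1 + ε) * μv +
    ∑ i : Fin m, Set.indicator {ω' | (1 + ε) * μv ≤ L i ω'} (fun _ => (n:ℝ)) ω with hgdef
  have hgint : Integrable g ℙ := by
    refine (integrable_const _).add (integrable_finset_sum _ fun i _ => ?_)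
    exact (integrable_const (n:ℝ)).indicator (hset i)
  have hpt : ∀ ω, M ω ≤ g ω := by
    intro ω
    refine Finset.sup'_le _ _ fun i _ => ?_
    by_cases h : (1 + ε) * μv ≤ L i ω
    · have hin : ω ∈ {ω' | (1 + ε) * μv ≤ L i ω'} := h
      have h1 : Set.indicator {ω' | (1 + ε) * μv ≤ L i ω'} (fun _ => (n:ℝ)) ω = n :=
        Set.indicator_of_mem hin _
      have h2 : (n:ℝ) ≤ ∑ i' : Fin m,
          Set.indicator {ω' | (1 + ε) * μv ≤ L i' ω'} (fun _ => (n:ℝ)) ω := by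
        have h2' := Finset.single_le_sum (f := fun i' =>
          Set.indicator {ω' | (1 + ε) * μv ≤ L i' ω'} (fun _ => (n:ℝ)) ω)
          (fun i' _ => Set.indicator_nonneg (fun _ _ => Nat.cast_nonneg n) ω)
          (Finset.mem_univ i)
        rw [h1] at h2'
        exact h2'
      have h3 : (0:ℝ) ≤ (1 + ε) * μv := by positivity
      calc L i ω ≤ (n:ℝ) := hLlen i ω
        _ ≤ g ω := by
            show (n:ℝ) ≤ (1 + ε) * μv +
              ∑ i' : Fin m, Set.indicator {ω' | (1 + ε) * μv ≤ L i' ω'} (fun _ => (n:ℝ)) ω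
            linarith
    · push_neg at h
      have h2 : (0:ℝ) ≤ ∑ i' : Fin m,
          Set.indicator {ω' | (1 + ε) * μv ≤ L i' ω'} (fun _ => (n:ℝ)) ω :=
        Finset.sum_nonneg fun i' _ => Set.indicator_nonneg (fun _ _ => Nat.cast_nonneg n) ω
      calc L i ω ≤ (1 + ε) * μv := h.le
        _ ≤ g ω := by
            show (1 + ε) * μv ≤ (1 + ε) * μv +
              ∑ i' : Fin m, Set.indicator {ω' | (1 + ε) * μv ≤ L i' ω'} (fun _ => (n:ℝ)) ω
            linarith
  have hint_le : (∫ ω, M ω ∂ℙ) ≤ ∫ ω, g ω ∂ℙ := integral_mono hMint hgint hpt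
  have hgval : (∫ ω, g ω ∂ℙ) = (1 + ε) * μv +
      ∑ i : Fin m, (ℙ {ω | (1 + ε) * μv ≤ L i ω}).toReal * n := by
    rw [hgdef]
    rw [integral_add (integrable_const _)
      (integrable_finset_sum _ fun i _ => (integrable_const (n:ℝ)).indicator (hset i))]
    rw [integral_const, integral_finset_sum _
      (fun i _ => (integrable_const (n:ℝ)).indicator (hset i))]
    congr 1
    · simp
    · refine Finset.sum_congr rfl fun i _ => ?_
      rw [integral_indicator_const (n:ℝ) (hset i)]
      simp [mul_comm]
      exact Or.inl rfl
  have hsum_le : ∑ i : Fin m, (ℙ {ω | (1 + ε) * μv ≤ L i ω}).toReal * n ≤ ε * μv := by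
    calc ∑ i : Fin m, (ℙ {ω | (1 + ε) * μv ≤ L i ω}).toReal * n
        ≤ ∑ _i : Fin m, (ε / m ^ 2) * n :=
          Finset.sum_le_sum fun i _ =>
            mul_le_mul_of_nonneg_right (hPle i) (Nat.cast_nonneg n)
      _ = (m:ℝ) * ((ε / m ^ 2) * n) := by
          rw [Finset.sum_const, Finset.card_univ, Fintype.card_fin, nsmul_eq_mul]
      _ = ε * ((n:ℝ) / m) := by field_simp
      _ ≤ ε * μv := mul_le_mul_of_nonneg_left hmax2 hε0.le
  have final : (∫ ω, ⨆ i : Fin m, L i ω ∂ℙ) = ∫ ω, M ω ∂ℙ := by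
    simp_rw [hMeq]
  rw [final]
  calc (∫ ω, M ω ∂ℙ) ≤ ∫ ω, g ω ∂ℙ := hint_le
    _ = (1 + ε) * μv + ∑ i : Fin m, (ℙ {ω | (1 + ε) * μv ≤ L i ω}).toReal * n := hgval
    _ ≤ (1 + ε) * μv + ε * μv := by linarith
    _ = (1 + 2 * ε) * μv := by ring
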